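/- arXiv:1211.6100 — 4 statements merged into one kernel-verified Lean document; each statement's English description precedes it below -/
import Mathlib

section
/- For parameters p, q with pq(p−q) ≠ 0 and distinct positive reals x ≠ y, the Stolarsky mean S_{p,q}(x,y) = (q(x^p − y^p)/(p(x^q − y^q)))^{1/(p−q)} satisfies min(x,y) < S_{p,q}(x,y) < max(x,y). -/
open Real Set

noncomputable def S (p q x y : ℝ) : ℝ :=
  (q * (x ^ p - y ^ p) / (p * (x ^ q - y ^ q))) ^ (1 / (p - q))

lemma key (p q x y : ℝ) (hp : p ≠ 0) (hq : q ≠ 0) (hne : p ≠ q)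
    (hy : 0 < y) (h : y < x) : y < S p q x y ∧ S p q x y < x := by
  have hcont : ∀ r : ℝ, ContinuousOn (fun t : ℝ => t ^ r) (Icc y x) := by
    intro r
    exact continuousOn_id.rpow_const (fun t ht => Or.inl (ne_of_gt (lt_of_lt_of_le hy ht.1)))
  have hderiv : ∀ r : ℝ, ∀ t ∈ Ioo y x, HasDerivAt (fun s : ℝ => s ^ r) (r * t ^ (r - 1)) t :=
    fun r t ht => Real.hasDerivAt_rpow_const (Or.inl (ne_of_gt (hy.trans ht.1)))
  obtain ⟨c, hc, heq⟩ := exists_ratio_hasDerivAt_eq_ratio_slope (fun t : ℝ => t ^ p)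
    (fun t => p * t ^ (p - 1)) h (hcont p) (hderiv p) (fun t : ℝ => t ^ q)
    (fun t => q * t ^ (q - 1)) (hcont q) (hderiv q)
  have hc0 : 0 < c := hy.trans hc.1
  have hxqy : x ^ q ≠ y ^ q := by
    rcases lt_or_gt_of_ne hq with hq' | hq'
    · exact ne_of_lt (Real.rpow_lt_rpow_of_neg hy h hq')
    · exact ne_of_gt (Real.rpow_lt_rpow hy.le h hq')
  have hden : p * (x ^ q - y ^ q) ≠ 0 := mul_ne_zero hp (sub_ne_zero.mpr hxqy)
  have hA : q * (x ^ p - y ^ p) / (p * (x ^ q - y ^ q)) = c ^ (p - q) := by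
    have h1 : c ^ (p - q) = c ^ (p - 1) / c ^ (q - 1) := by
      rw [← Real.rpow_sub hc0]; ring_nf
    rw [h1, div_eq_div_iff hden (ne_of_gt (Real.rpow_pos_of_pos hc0 _))]
    nlinarith [heq]
  have hS : S p q x y = c := by
    rw [S, hA, ← Real.rpow_mul hc0.le, mul_one_div_cancel (sub_ne_zero.mpr hne),
      Real.rpow_one]
  rw [hS]; exact ⟨hc.1, hc.2⟩

theorem stolarsky_strict_mean (p q x y : ℝ) (hpq : p * q * (p - q) ≠ 0)
    (hx : 0 < x) (hy : 0 < y) (hxy : x ≠ y) :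
    min x y < S p q x y ∧ S p q x y < max x y := by
  have hp : p ≠ 0 := fun h => hpq (by simp [h])
  have hq : q ≠ 0 := fun h => hpq (by simp [h])
  have hne : p ≠ q := fun h => hpq (by simp [h])
  rcases lt_or_gt_of_ne hxy with h | h
  · have hswap : S p q x y = S p q y x := by
      have h1 : q * (x ^ p - y ^ p) = -(q * (y ^ p - x ^ p)) := by ring
      have h2 : p * (x ^ q - y ^ q) = -(p * (y ^ q - x ^ q)) := by ring
      rw [S, S, h1, h2, neg_div_neg_eq]
    rw [min_eq_left h.le, max_eq_right h.le, hswap]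
    exact key p q y x hp hq hne hx h
  · rw [min_eq_right h.le, max_eq_left h.le]
    exact key p q x y hp hq hne hy h
end

section
/- Define E(p,q,u,v) := (log L(pu,pv) − log L(qu,qv))/(p−q) for p ≠ q, where L(u,v) := Σ_{n≥1}(u^{n-1}+⋯+v^{n-1})/n!. Then for pq(p−q) ≠ 0 and u ≠ v, E(p,q,u,v) = log S_{p,q}(e^u, e^v). -/
open Real

noncomputable def L (u v : ℝ) : ℝ :=
  ∑' n : ℕ, (∑ i ∈ Finset.range (n + 1), u ^ (n - i) * v ^ i) / (Nat.factorial (n + 1) : ℝ)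

noncomputable def E (p q u v : ℝ) : ℝ :=
  (Real.log (L (p * u) (p * v)) - Real.log (L (q * u) (q * v))) / (p - q)

lemma exp_eq_tsum_pow (x : ℝ) :
    Real.exp x = ∑' n : ℕ, x ^ n / (Nat.factorial n : ℝ) := by
  rw [Real.exp_eq_exp_ℝ, NormedSpace.exp_eq_tsum_div]

lemma tsum_succ_pow (x : ℝ) :
    ∑' n : ℕ, x ^ (n + 1) / (Nat.factorial (n + 1) : ℝ) = Real.exp x - 1 := by
  have h : Summable fun n : ℕ => x ^ n / (Nat.factorial n : ℝ) :=
    Real.summable_pow_div_factorial x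
  have h0 := Summable.tsum_eq_zero_add h
  rw [exp_eq_tsum_pow x, h0]
  simp

lemma L_mul' (u v : ℝ) : L u v * (u - v) = Real.exp u - Real.exp v := by
  unfold L
  rw [← tsum_mul_right]
  have key : ∀ n : ℕ, (∑ i ∈ Finset.range (n + 1), u ^ (n - i) * v ^ i) /
      (Nat.factorial (n + 1) : ℝ) * (u - v)
      = u ^ (n + 1) / (Nat.factorial (n + 1) : ℝ) - v ^ (n + 1) / (Nat.factorial (n + 1) : ℝ) := by
    intro n
    have h1 : (∑ i ∈ Finset.range (n + 1), u ^ (n - i) * v ^ i)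
        = ∑ i ∈ Finset.range (n + 1), u ^ i * v ^ (n - i) := by
      rw [← Finset.sum_range_reflect]
      refine Finset.sum_congr rfl fun i hi => ?_
      have hin : i ≤ n := Nat.lt_succ_iff.mp (Finset.mem_range.mp hi)
      have : n + 1 - 1 - i = n - i := by omega
      rw [this]
      have : n - (n - i) = i := by omega
      rw [this]
    have h2 := geom_sum₂_mul u v (n + 1)
    simp only [Nat.add_sub_cancel] at h2
    rw [h1, div_mul_eq_mul_div, h2, sub_div]
  rw [tsum_congr key]
  have hu : Summable fun n : ℕ => u ^ (n + 1) / (Nat.factorial (n + 1) : ℝ) :=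
    (summable_nat_add_iff (f := fun n => u ^ n / (Nat.factorial n : ℝ)) 1).mpr
      (Real.summable_pow_div_factorial u)
  have hv : Summable fun n : ℕ => v ^ (n + 1) / (Nat.factorial (n + 1) : ℝ) :=
    (summable_nat_add_iff (f := fun n => v ^ n / (Nat.factorial n : ℝ)) 1).mpr
      (Real.summable_pow_div_factorial v)
  rw [Summable.tsum_sub hu hv, tsum_succ_pow, tsum_succ_pow]
  ring

lemma L_eq' (u v : ℝ) (h : u ≠ v) : L u v = (Real.exp u - Real.exp v) / (u - v) := by
  have := L_mul' u v
  field_simp [sub_ne_zero.mpr h]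
  linarith [L_mul' u v]

lemma L_pos (u v : ℝ) (h : u ≠ v) : 0 < L u v := by
  rw [L_eq' u v h]
  rcases lt_or_gt_of_ne h with hlt | hlt
  · apply div_pos_of_neg_of_neg
    · simpa using Real.exp_lt_exp.mpr hlt
    · linarith
  · apply div_pos
    · simpa using Real.exp_lt_exp.mpr hlt
    · linarith

theorem E_eq_log_S (p q u v : ℝ) (hpq : p * q * (p - q) ≠ 0) (huv : u ≠ v) :
    E p q u v = Real.log (S p q (Real.exp u) (Real.exp v)) := by
  have hp : p ≠ 0 := by intro h; apply hpq; rw [h]; ring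
  have hq : q ≠ 0 := by intro h; apply hpq; rw [h]; ring
  have hpq' : p - q ≠ 0 := by
    intro h; apply hpq; rw [h]; ring
  have hpu : p * u ≠ p * v := fun h => huv (mul_left_cancel₀ hp h)
  have hqu : q * u ≠ q * v := fun h => huv (mul_left_cancel₀ hq h)
  have hLp := L_pos _ _ hpu
  have hLq := L_pos _ _ hqu
  have hB : q * (Real.exp u ^ p - Real.exp v ^ p) / (p * (Real.exp u ^ q - Real.exp v ^ q))
      = L (p * u) (p * v) / L (q * u) (q * v) := by
    rw [L_eq' _ _ hpu, L_eq' _ _ hqu, ← Real.exp_mul, ← Real.exp_mul, ← Real.exp_mul,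
      ← Real.exp_mul, mul_comm u p, mul_comm v q, mul_comm u q, mul_comm v p]
    have h1 : p * u - p * v = p * (u - v) := by ring
    have h2 : q * u - q * v = q * (u - v) := by ring
    rw [h1, h2]
    have huv' : u - v ≠ 0 := sub_ne_zero.mpr huv
    have hne : Real.exp (q * u) - Real.exp (q * v) ≠ 0 :=
      sub_ne_zero.mpr fun h => hqu (Real.exp_injective h)
    field_simp
  unfold E S
  rw [hB, Real.log_rpow (div_pos hLp hLq), Real.log_div hLp.ne' hLq.ne']
  ring
end

section
/- Suppose a, b, c, d ∈ ℝ with ab(a−b) ≠ 0 and cd(c−d) ≠ 0, {a,b} ≠ {2,1} or {c,d} ≠ {2,1}. Then the Matkowski–Sutô equation S_{a,b}(x,y) + S_{c,d}(x,y) = x + y fails for some positive x, y. Equivalently: S_{a,b}(x,y) + S_{c,d}(x,y) = x + y holds for all positive x, y iff {a,b} = {c,d} = {2,1}. -/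
open Real

open Filter Set Topology

/-- The Stolarsky mean extended to the diagonal by S(x,x) = x. -/
noncomputable def Sfull (p q x y : ℝ) : ℝ :=
  if x = y then x else S p q x y

lemma sign_fact {t p : ℝ} (ht : t ∈ Ioo (0:ℝ) 1) (hp : p ≠ 0) : 0 < p * (1 - t^p) := by
  rcases lt_or_gt_of_ne hp with h | h
  · have h1 : 1 < t ^ p := (Real.one_lt_rpow_iff_of_pos ht.1).mpr (Or.inr ⟨ht.2, h⟩)
    nlinarith
  · have h1 : t ^ p < 1 := Real.rpow_lt_one ht.1.le ht.2 h
    nlinarith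

lemma one_sub_ne {t p : ℝ} (ht : t ∈ Ioo (0:ℝ) 1) (hp : p ≠ 0) : 1 - t^p ≠ 0 := by
  have := sign_fact ht hp
  intro h; rw [h] at this; simp at this


local notation "l" => 𝓝[>] (0:ℝ)

lemma hIoo : ∀ᶠ t in l, t ∈ Ioo (0:ℝ) 1 := by
  filter_upwards [Ioo_mem_nhdsGT_of_mem (by norm_num : (0:ℝ) ∈ Ico (0:ℝ) 1)] with t ht using ht

/-- t^e → 0 as t → 0+, for e > 0. -/
lemma T0 {e : ℝ} (he : 0 < e) : Tendsto (fun t : ℝ => t ^ e) l (𝓝 0) := by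
  have h := (Real.continuousAt_rpow_const 0 e (Or.inr he.le)).tendsto
  rw [Real.zero_rpow he.ne'] at h
  exact h.mono_left nhdsWithin_le_nhds

/-- B → 0 and lam > 0 imply B^lam → 0. -/
lemma rpow_tendsto_zero {B : ℝ → ℝ} {lam : ℝ} (hlam : 0 < lam)
    (hB : Tendsto B l (𝓝 0)) : Tendsto (fun t => B t ^ lam) l (𝓝 0) := by
  have h := (Real.continuousAt_rpow_const 0 lam (Or.inr hlam.le)).tendsto
  rw [Real.zero_rpow hlam.ne'] at h
  exact h.comp hB

/-- first-order limit for rpow at 1 -/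
lemma L1 (lam : ℝ) :
    Tendsto (fun u : ℝ => ((1+u) ^ lam - 1) / u) (𝓝[≠] 0) (𝓝 lam) := by
  have h := Real.hasDerivAt_rpow_const (x := (1:ℝ)) (p := lam) (Or.inl one_ne_zero)
  rw [hasDerivAt_iff_tendsto_slope] at h
  have hmap : Tendsto (fun u : ℝ => 1 + u) (𝓝[≠] 0) (𝓝[≠] 1) := by
    apply tendsto_nhdsWithin_of_tendsto_nhds_of_eventually_within
    · have : Tendsto (fun u : ℝ => 1 + u) (𝓝 0) (𝓝 1) := by
        simpa [Pi.add_def] using (continuous_const.add continuous_id).tendsto (0:ℝ)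
      exact this.mono_left nhdsWithin_le_nhds
    · filter_upwards [eventually_mem_nhdsWithin] with u (hu : u ≠ 0)
      simpa using hu
  have h2 := h.comp hmap
  simp only [Real.one_rpow, Real.rpow_one, mul_one] at h2
  refine h2.congr fun u => ?_
  simp only [Function.comp, slope, Real.one_rpow, vsub_eq_sub, add_sub_cancel_left, smul_eq_mul]
  rw [inv_mul_eq_div]

lemma L1' (lam : ℝ) :
    Tendsto (fun u : ℝ => ((1+u) ^ lam - 1) / u) l (𝓝 lam) :=
  (L1 lam).mono_left (nhdsWithin_mono 0 fun x hx => ne_of_gt hx)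

/-- second-order limit for rpow at 1 -/
lemma L2 (lam : ℝ) :
    Tendsto (fun u : ℝ => ((1+u) ^ lam - 1 - lam * u) / (u*u)) l
      (𝓝 (lam * (lam - 1) / 2)) := by
  have hd : ∀ᶠ u in l, HasDerivAt (fun u : ℝ => (1+u) ^ lam - 1 - lam * u)
      (lam * (1+u) ^ (lam-1) - lam) u := by
    filter_upwards [self_mem_nhdsWithin] with u (hu : 0 < u)
    have h1 : HasDerivAt (fun u : ℝ => 1 + u) 1 u := by
      simpa using (hasDerivAt_id u).const_add 1
    have h2 := (Real.hasDerivAt_rpow_const (x := 1 + u) (p := lam)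
      (Or.inl (by positivity))).comp u h1
    simpa [mul_one, Pi.sub_def] using (h2.sub_const 1).sub ((hasDerivAt_id u).const_mul lam)
  have hg : ∀ᶠ u in l, HasDerivAt (fun u : ℝ => u*u) (2*u) u := by
    filter_upwards with u
    have := (hasDerivAt_id u).mul (hasDerivAt_id u)
    simpa [two_mul, Pi.mul_def] using this
  have hg' : ∀ᶠ u in l, (2:ℝ)*u ≠ 0 := by
    filter_upwards [self_mem_nhdsWithin] with u (hu : 0 < u); positivity
  have hf0 : Tendsto (fun u : ℝ => (1+u) ^ lam - 1 - lam * u) l (𝓝 0) := by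
    have hc : ContinuousAt (fun u : ℝ => (1+u) ^ lam - 1 - lam * u) 0 := by
      have : ContinuousAt (fun x : ℝ => x ^ lam) 1 :=
        Real.continuousAt_rpow_const 1 lam (Or.inl one_ne_zero)
      have hca : ContinuousAt (fun u : ℝ => 1 + u) 0 := by fun_prop
      have := ContinuousAt.comp (by simpa using this) hca
      exact (this.sub continuousAt_const).sub (by fun_prop)
    have h3 : Tendsto (fun u : ℝ => (1+u) ^ lam - 1 - lam * u) l (𝓝 ((1+0)^lam - 1 - lam*0)) :=
      hc.tendsto.mono_left nhdsWithin_le_nhds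
    simpa using h3
  have hg0 : Tendsto (fun u : ℝ => u*u) l (𝓝 0) := by
    have : Tendsto (fun u : ℝ => u*u) (𝓝 0) (𝓝 0) := by
      simpa [Pi.mul_def] using (continuous_id.mul continuous_id).tendsto (0:ℝ)
    exact this.mono_left nhdsWithin_le_nhds
  have hdiv : Tendsto (fun u : ℝ => (lam * (1+u) ^ (lam-1) - lam) / (2*u)) l
      (𝓝 (lam * (lam - 1) / 2)) := by
    have := (L1' (lam - 1)).const_mul (lam/2)
    refine this.congr' ?_ |>.mono_right (by rw [show lam/2*(lam-1) = lam*(lam-1)/2 by ring])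
    filter_upwards [self_mem_nhdsWithin] with u (hu : 0 < u)
    field_simp
  exact HasDerivAt.lhopital_zero_nhdsGT hd hg hg' hf0 hg0 hdiv

lemma base_pos {p q t : ℝ} (ht : t ∈ Ioo (0:ℝ) 1) (hp : p ≠ 0) (hq : q ≠ 0) :
    0 < q * (1 - t^p) / (p * (1 - t^q)) := by
  have h1 := sign_fact ht hp
  have h2 := sign_fact ht hq
  have hqp : q / p ≠ 0 := div_ne_zero hq hp
  have key : q * (1 - t^p) / (p * (1 - t^q))
      = (q/p)^2 * ((p * (1 - t^p)) / (q * (1 - t^q))) := by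
    have h3 := one_sub_ne ht hq
    field_simp
  rw [key]
  positivity

lemma S_one (p q t : ℝ) : S p q 1 t = (q * (1 - t^p) / (p * (1 - t^q))) ^ (1/(p-q)) := by
  simp [S, Real.one_rpow]

lemma S_symm {p q t : ℝ} (ht : t ∈ Ioo (0:ℝ) 1) (hp : p ≠ 0) (hq : q ≠ 0) (hpq : p ≠ q) :
    S q p 1 t = S p q 1 t := by
  rw [S_one, S_one]
  have hB := base_pos ht hp hq
  have hN : q * (1 - t^p) ≠ 0 := mul_ne_zero hq (one_sub_ne ht hp)
  have hD : p * (1 - t^q) ≠ 0 := mul_ne_zero hp (one_sub_ne ht hq)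
  have hinv : p * (1 - t^q) / (q * (1 - t^p)) = (q * (1 - t^p) / (p * (1 - t^q)))⁻¹ := by
    field_simp
  have hexp : 1/(q-p) = -(1/(p-q)) := by
    rw [show q - p = -(p-q) by ring, div_neg]
  rw [hinv, hexp, Real.rpow_neg (inv_nonneg.mpr hB.le), Real.inv_rpow hB.le, inv_inv]


lemma rpow_two' (t : ℝ) : t ^ (2:ℝ) = t * t := by
  rw [show (2:ℝ) = ((2:ℕ):ℝ) by norm_num, Real.rpow_natCast]
  ring

section limS
variable {p q : ℝ}

lemma limS_pos (hq : 0 < q) (hpq : q < p) :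
    Tendsto (fun t => S p q 1 t) l (𝓝 ((q/p) ^ (1/(p-q)))) := by
  have hp : 0 < p := hq.trans hpq
  have h1 : Tendsto (fun t : ℝ => q * (1 - t^p)) l (𝓝 q) := by
    have := ((T0 hp).const_sub 1).const_mul q
    simpa using this
  have h2 : Tendsto (fun t : ℝ => p * (1 - t^q)) l (𝓝 p) := by
    have := ((T0 hq).const_sub 1).const_mul p
    simpa using this
  have hBt : Tendsto (fun t : ℝ => q * (1 - t^p) / (p * (1 - t^q))) l (𝓝 (q/p)) :=
    h1.div h2 hp.ne'
  have hc : ContinuousAt (fun x : ℝ => x ^ (1/(p-q))) (q/p) :=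
    Real.continuousAt_rpow_const _ _ (Or.inl (div_pos hq hp).ne')
  exact (hc.tendsto.comp hBt).congr fun t => (S_one p q t).symm
end limS

section limSzero
variable {p q : ℝ}

lemma limS_zero (hq : q < 0) (hp0 : p ≠ 0) (hpq : q < p) :
    Tendsto (fun t => S p q 1 t) l (𝓝 0) := by
  have hlam : 0 < 1/(p-q) := by
    have : 0 < p - q := by linarith
    positivity
  have hBt : Tendsto (fun t : ℝ => q * (1 - t^p) / (p * (1 - t^q))) l (𝓝 0) := by
    rcases lt_or_gt_of_ne hp0 with hpneg | hppos
    · -- q < p < 0 : B = (q/p) * t^(p-q) * ((1 - t^(-p))/(1 - t^(-q)))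
      have hlim : Tendsto (fun t : ℝ => (q/p) * t^(p-q) * ((1 - t^(-p))/(1 - t^(-q)))) l
          (𝓝 0) := by
        have h1 : Tendsto (fun t : ℝ => (q/p) * t^(p-q)) l (𝓝 0) := by
          have := (T0 (by linarith : (0:ℝ) < p - q)).const_mul (q/p)
          simpa using this
        have h2 : Tendsto (fun t : ℝ => (1 - t^(-p))/(1 - t^(-q))) l (𝓝 1) := by
          have hn : Tendsto (fun t : ℝ => 1 - t^(-p)) l (𝓝 1) := by
            have := (T0 (by linarith : (0:ℝ) < -p)).const_sub 1
            simpa using this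
          have hd : Tendsto (fun t : ℝ => 1 - t^(-q)) l (𝓝 1) := by
            have := (T0 (by linarith : (0:ℝ) < -q)).const_sub 1
            simpa using this
          simpa [Pi.div_def] using hn.div hd one_ne_zero
        simpa using h1.mul h2
      refine hlim.congr' ?_
      filter_upwards [hIoo] with t ht
      have htp : (0:ℝ) < t^p := Real.rpow_pos_of_pos ht.1 p
      have htq : (0:ℝ) < t^q := Real.rpow_pos_of_pos ht.1 q
      have h1q : 1 - t^q ≠ 0 := one_sub_ne ht hq.ne
      have h1q' : t^q - 1 ≠ 0 := fun h => h1q (by linarith [sub_eq_zero.mp h])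
      rw [Real.rpow_sub ht.1, Real.rpow_neg ht.1.le, Real.rpow_neg ht.1.le]
      field_simp
      ring
    · -- q < 0 < p : B = (q*(1-t^p)*t^(-q)) / (p*(t^(-q) - 1))
      have hlim : Tendsto (fun t : ℝ => q * (1 - t^p) * t^(-q) / (p * (t^(-q) - 1))) l
          (𝓝 0) := by
        have hn : Tendsto (fun t : ℝ => q * (1 - t^p) * t^(-q)) l (𝓝 0) := by
          have h1 : Tendsto (fun t : ℝ => q * (1 - t^p)) l (𝓝 q) := by
            have := ((T0 hppos).const_sub 1).const_mul q
            simpa using this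
          have := h1.mul (T0 (by linarith : (0:ℝ) < -q))
          simpa using this
        have hd : Tendsto (fun t : ℝ => p * (t^(-q) - 1)) l (𝓝 (-p)) := by
          have := ((T0 (by linarith : (0:ℝ) < -q)).sub_const 1).const_mul p
          simpa using this
        have h3 := hn.div hd (neg_ne_zero.mpr hp0)
        simpa [Pi.div_def] using h3
      refine hlim.congr' ?_
      filter_upwards [hIoo] with t ht
      have htq : (0:ℝ) < t^q := Real.rpow_pos_of_pos ht.1 q
      rw [Real.rpow_neg ht.1.le]
      field_simp
  have := rpow_tendsto_zero hlam hBt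
  exact this.congr fun t => (S_one p q t).symm
end limSzero
lemma alg1 {al lam t tp X Y : ℝ} (ht0 : t ≠ 0) (ht1 : 1 - t ≠ 0) (htp : tp ≠ 0)
    (http : t - tp ≠ 0) (hX : X = (t - tp)/(1-t)) :
    al * ((Y - 1 - lam*X)/(X*X)) * (X/t) * (X/t) * (t*t/tp) + al*lam*((t*t/tp) - 1)/(1-t)
      = (al*Y - al - al*lam*t)/tp := by
  subst hX
  field_simp
  ring

lemma alg2 {al lam t tp X Y : ℝ} (ht0 : t ≠ 0) (ht1 : 1 - t ≠ 0) (htp : tp ≠ 0)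
    (http : t - tp ≠ 0) (hX : X = (t - tp)/(1-t)) :
    al * ((Y - 1 - lam*X)/(X*X)) * (X/t) * (X/t) + al*lam*(1 - tp/(t*t))/(1-t)
      = (al*Y - al - al*lam*t)/(t*t) := by
  subst hX
  field_simp
  ring
noncomputable def wf (p q t : ℝ) : ℝ := (t^q - t^p)/(1 - t^q)

lemma w_facts {p q : ℝ} (hq : 0 < q) (hpq : q < p) {t : ℝ} (ht : t ∈ Ioo (0:ℝ) 1) :
    0 < wf p q t ∧ S p q 1 t = (q/p)^(1/(p-q)) * (1 + wf p q t)^(1/(p-q)) := by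
  have hp : 0 < p := hq.trans hpq
  have h1q : 0 < 1 - t^q := by have := sign_fact ht hq.ne'; nlinarith
  have hnum : 0 < t^q - t^p := sub_pos.mpr (Real.rpow_lt_rpow_of_exponent_gt ht.1 ht.2 hpq)
  have hw : 0 < wf p q t := div_pos hnum h1q
  refine ⟨hw, ?_⟩
  rw [S_one]
  have h1 : q * (1 - t^p) / (p * (1 - t^q)) = (q/p) * ((1-t^p)/(1-t^q)) :=
    (div_mul_div_comm _ _ _ _).symm
  have h2 : (1-t^p)/(1-t^q) = 1 + wf p q t := by
    unfold wf
    field_simp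
    ring
  rw [h1, h2, Real.mul_rpow (by positivity) (by positivity)]

lemma w_tendsto {p q : ℝ} (hq : 0 < q) (hpq : q < p) :
    Tendsto (wf p q) l (𝓝[>] 0) := by
  have hp : 0 < p := hq.trans hpq
  apply tendsto_nhdsWithin_of_tendsto_nhds_of_eventually_within
  · have hn : Tendsto (fun t : ℝ => t^q - t^p) l (𝓝 0) := by
      simpa using (T0 hq).sub (T0 hp)
    have hd : Tendsto (fun t : ℝ => 1 - t^q) l (𝓝 1) := by
      simpa using (T0 hq).const_sub 1
    have h := hn.div hd one_ne_zero; rw [zero_div] at h; exact h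
  · filter_upwards [hIoo] with t ht
    exact (w_facts hq hpq ht).1

lemma w_ratio {p q : ℝ} (hq : 0 < q) (hpq : q < p) :
    Tendsto (fun t => wf p q t / t^q) l (𝓝 1) := by
  have hlim : Tendsto (fun t : ℝ => (1 - t^(p-q))/(1 - t^q)) l (𝓝 1) := by
    have hn : Tendsto (fun t : ℝ => 1 - t^(p-q)) l (𝓝 1) := by
      simpa using (T0 (by linarith : (0:ℝ) < p - q)).const_sub 1
    have hd : Tendsto (fun t : ℝ => 1 - t^q) l (𝓝 1) := by
      simpa using (T0 hq).const_sub 1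
    simpa [Pi.div_def] using hn.div hd one_ne_zero
  refine hlim.congr' ?_
  filter_upwards [hIoo] with t ht
  have htq : t^q ≠ 0 := (Real.rpow_pos_of_pos ht.1 q).ne'
  have h1q : 1 - t^q ≠ 0 := one_sub_ne ht hq.ne'
  rw [Real.rpow_sub ht.1]
  unfold wf
  field_simp
  try ring
  try exact Or.inl trivial

lemma limA {p q : ℝ} (hq : 0 < q) (hpq : q < p) :
    Tendsto (fun t => (S p q 1 t - (q/p)^(1/(p-q))) / t^q) l
      (𝓝 ((q/p)^(1/(p-q)) * (1/(p-q)))) := by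
  set lam := 1/(p-q) with hlam
  set al := (q/p)^lam with hal
  have hw := w_tendsto hq hpq
  have hw0 : Tendsto (wf p q) l (𝓝[≠] 0) :=
    hw.mono_right (nhdsWithin_mono 0 fun x hx => ne_of_gt hx)
  have k1 : Tendsto (fun t => ((1 + wf p q t)^lam - 1)/(wf p q t)) l (𝓝 lam) :=
    (L1 lam).comp hw0
  have k3 : Tendsto (fun t => al * (((1 + wf p q t)^lam - 1)/(wf p q t)) * (wf p q t / t^q))
      l (𝓝 (al * lam * 1)) := (tendsto_const_nhds.mul k1).mul (w_ratio hq hpq)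
  rw [mul_one] at k3
  refine k3.congr' ?_
  filter_upwards [hIoo] with t ht
  obtain ⟨hw_pos, hS⟩ := w_facts hq hpq ht
  have htq : t^q ≠ 0 := (Real.rpow_pos_of_pos ht.1 q).ne'
  rw [hS, ← hal]
  field_simp
  ring

section limB
variable {p : ℝ}

lemma w_one {p t : ℝ} (ht : t ∈ Ioo (0:ℝ) 1) : wf p 1 t = (t - t^p)/(1-t) := by
  unfold wf; rw [Real.rpow_one]

lemma limB_lt (hp1 : 1 < p) (hp2 : p < 2) :
    Tendsto (fun t => (S p 1 1 t - (1/p)^(1/(p-1)) - (1/p)^(1/(p-1)) * (1/(p-1)) * t) / t^p)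
      l (𝓝 (-((1/p)^(1/(p-1)) * (1/(p-1))))) := by
  set lam := 1/(p-1) with hlam
  set al := ((1:ℝ)/p)^lam with hal
  have h01 : (0:ℝ) < 1 := one_pos
  have hw := w_tendsto h01 hp1
  have kL2 : Tendsto (fun t => ((1 + wf p 1 t)^lam - 1 - lam * wf p 1 t)/(wf p 1 t * wf p 1 t))
      l (𝓝 (lam * (lam - 1)/2)) := (L2 lam).comp hw
  have k2 : Tendsto (fun t => wf p 1 t / t) l (𝓝 1) := by
    have := w_ratio h01 hp1
    refine this.congr fun t => ?_
    rw [Real.rpow_one]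
  have term1 : Tendsto (fun t => al * (((1 + wf p 1 t)^lam - 1 - lam * wf p 1 t)/(wf p 1 t * wf p 1 t))
      * (wf p 1 t / t) * (wf p 1 t / t) * t^(2-p)) l (𝓝 0) := by
    have h0 : Tendsto (fun _ : ℝ => al) l (𝓝 al) := tendsto_const_nhds
    have := (((h0.mul kL2).mul k2).mul k2).mul (T0 (by linarith : (0:ℝ) < 2 - p))
    simpa using this
  have term2 : Tendsto (fun t => al * lam * (t^(2-p) - 1)/(1-t)) l (𝓝 (-(al * lam))) := by
    have hn : Tendsto (fun t : ℝ => al * lam * (t^(2-p) - 1)) l (𝓝 (-(al*lam))) := by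
      have := ((T0 (by linarith : (0:ℝ) < 2 - p)).sub_const 1).const_mul (al*lam)
      simpa using this
    have hd : Tendsto (fun t : ℝ => 1 - t) l (𝓝 1) := by
      have : Tendsto (fun t : ℝ => 1 - t) (𝓝 0) (𝓝 1) := by
        simpa [Pi.sub_def] using (continuous_const.sub continuous_id).tendsto (0:ℝ)
      exact this.mono_left nhdsWithin_le_nhds
    simpa [Pi.div_def] using hn.div hd one_ne_zero
  have sum := term1.add term2
  rw [zero_add] at sum
  refine sum.congr' ?_
  filter_upwards [hIoo] with t ht
  obtain ⟨hw_pos, hS⟩ := w_facts h01 hp1 ht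
  have ht0 : t ≠ 0 := ht.1.ne'
  have ht1 : (1:ℝ) - t ≠ 0 := by have := ht.2; intro h; linarith [sub_eq_zero.mp h]
  have htp : t^p ≠ 0 := (Real.rpow_pos_of_pos ht.1 p).ne'
  have h2p : t^(2-p) = t*t/t^p := by
    rw [Real.rpow_sub ht.1, rpow_two']
  have hSval : S p 1 1 t = al * (1 + wf p 1 t)^lam := by
    rw [hal, hlam]; exact hS
  have httpne : t - t^p ≠ 0 := by
    have h := Real.rpow_lt_rpow_of_exponent_gt ht.1 ht.2 hp1
    rw [Real.rpow_one] at h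
    exact sub_ne_zero.mpr h.ne'
  rw [hSval, h2p]
  exact alg1 ht0 ht1 htp httpne (w_one ht)

lemma limB_gt (hp2 : 2 < p) :
    Tendsto (fun t => (S p 1 1 t - (1/p)^(1/(p-1)) - (1/p)^(1/(p-1)) * (1/(p-1)) * t) / (t*t))
      l (𝓝 ((1/p)^(1/(p-1)) * (1/(p-1)) * ((1/(p-1)) + 1) / 2)) := by
  have hp1 : 1 < p := by linarith
  set lam := 1/(p-1) with hlam
  set al := ((1:ℝ)/p)^lam with hal
  have h01 : (0:ℝ) < 1 := one_pos
  have hw := w_tendsto h01 hp1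
  have kL2 : Tendsto (fun t => ((1 + wf p 1 t)^lam - 1 - lam * wf p 1 t)/(wf p 1 t * wf p 1 t))
      l (𝓝 (lam * (lam - 1)/2)) := (L2 lam).comp hw
  have k2 : Tendsto (fun t => wf p 1 t / t) l (𝓝 1) := by
    have := w_ratio h01 hp1
    refine this.congr fun t => ?_
    rw [Real.rpow_one]
  have term1 : Tendsto (fun t => al * (((1 + wf p 1 t)^lam - 1 - lam * wf p 1 t)/(wf p 1 t * wf p 1 t))
      * (wf p 1 t / t) * (wf p 1 t / t)) l (𝓝 (al * (lam * (lam-1)/2))) := by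
    have h0 : Tendsto (fun _ : ℝ => al) l (𝓝 al) := tendsto_const_nhds
    have := ((h0.mul kL2).mul k2).mul k2
    simpa using this
  have term2 : Tendsto (fun t => al * lam * (1 - t^(p-2))/(1-t)) l (𝓝 (al * lam)) := by
    have hn : Tendsto (fun t : ℝ => al * lam * (1 - t^(p-2))) l (𝓝 (al*lam)) := by
      have := ((T0 (by linarith : (0:ℝ) < p - 2)).const_sub 1).const_mul (al*lam)
      simpa using this
    have hd : Tendsto (fun t : ℝ => 1 - t) l (𝓝 1) := by
      have : Tendsto (fun t : ℝ => 1 - t) (𝓝 0) (𝓝 1) := by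
        simpa [Pi.sub_def] using (continuous_const.sub continuous_id).tendsto (0:ℝ)
      exact this.mono_left nhdsWithin_le_nhds
    simpa [Pi.div_def] using hn.div hd one_ne_zero
  have sum := term1.add term2
  have heq : al * (lam * (lam-1)/2) + al * lam = al * lam * (lam + 1) / 2 := by ring
  rw [heq] at sum
  refine sum.congr' ?_
  filter_upwards [hIoo] with t ht
  obtain ⟨hw_pos, hS⟩ := w_facts h01 hp1 ht
  have ht0 : t ≠ 0 := ht.1.ne'
  have ht1 : (1:ℝ) - t ≠ 0 := by have := ht.2; intro h; linarith [sub_eq_zero.mp h]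
  have htp : t^p ≠ 0 := (Real.rpow_pos_of_pos ht.1 p).ne'
  have h2p : t^(p-2) = t^p/(t*t) := by
    rw [Real.rpow_sub ht.1, rpow_two']
  have hSval : S p 1 1 t = al * (1 + wf p 1 t)^lam := by
    rw [hal, hlam]; exact hS
  have httpne : t - t^p ≠ 0 := by
    have h := Real.rpow_lt_rpow_of_exponent_gt ht.1 ht.2 hp1
    rw [Real.rpow_one] at h
    exact sub_ne_zero.mpr h.ne'
  rw [hSval, h2p]
  exact alg2 ht0 ht1 htp httpne (w_one ht)

end limB

lemma S21_one {t : ℝ} (ht : t ∈ Ioo (0:ℝ) 1) : S 2 1 1 t = (1+t)/2 := by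
  rw [S_one]
  have ht1 : (1:ℝ) - t ≠ 0 := sub_ne_zero.mpr (ne_of_gt ht.2)
  rw [Real.rpow_one, rpow_two']
  have hb : (1:ℝ) * (1 - t*t) / (2 * (1-t)) = (1+t)/2 := by
    field_simp
    ring
  rw [hb, show 1/((2:ℝ)-1) = 1 by norm_num, Real.rpow_one]

lemma entropy {u : ℝ} (hu0 : 0 < u) (hu1 : u < 1) (hne : u ≠ 1/2) :
    -Real.log 2 < u * Real.log u + (1-u) * Real.log (1-u) := by
  have hxy : u ≠ 1 - u := fun h => hne (by linarith)
  have h := Real.strictConvexOn_mul_log.2 (Set.mem_Ici.mpr hu0.le)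
    (Set.mem_Ici.mpr (by linarith : (0:ℝ) ≤ 1-u)) hxy
    (by norm_num : (0:ℝ) < 1/2) (by norm_num : (0:ℝ) < 1/2) (by norm_num)
  have hmid : (1/2 : ℝ) • u + (1/2 : ℝ) • (1-u) = 1/2 := by
    simp only [smul_eq_mul]; ring
  rw [hmid] at h
  simp only [smul_eq_mul] at h
  have hlog : (1/2 : ℝ) * Real.log (1/2) = -(Real.log 2)/2 := by
    rw [one_div, Real.log_inv]; ring
  rw [hlog] at h
  linarith

example : True := trivial

lemma compare_exponents {F : ℝ → ℝ} {e e' C C' : ℝ} (hee' : e < e')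
    (hC : Tendsto (fun t => F t / t^e) l (𝓝 C))
    (hC' : Tendsto (fun t => F t / t^e') l (𝓝 C')) : C = 0 := by
  have h := hC'.mul (T0 (sub_pos.mpr hee'))
  rw [mul_zero] at h
  have h2 : Tendsto (fun t => F t / t^e) l (𝓝 0) := by
    refine h.congr' ?_
    filter_upwards [hIoo] with t ht
    have h1 : t^e ≠ 0 := (Real.rpow_pos_of_pos ht.1 e).ne'
    have h2 : t^e' ≠ 0 := (Real.rpow_pos_of_pos ht.1 e').ne'
    rw [Real.rpow_sub ht.1]
    field_simp
  exact tendsto_nhds_unique hC h2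

lemma exponent_eq_one {bb K : ℝ} (hKpos : 0 < K)
    (hK : Tendsto (fun t : ℝ => t^(1-bb)) l (𝓝 K)) : bb = 1 ∧ K = 1 := by
  have hbb : bb = 1 := by
    rcases lt_trichotomy bb 1 with h1 | h1 | h1
    · exfalso
      have h0 := tendsto_nhds_unique hK (T0 (by linarith : (0:ℝ) < 1 - bb))
      linarith
    · exact h1
    · exfalso
      have hprod := hK.mul (T0 (by linarith : (0:ℝ) < bb - 1))
      rw [mul_zero] at hprod
      have hconst : Tendsto (fun t : ℝ => t^(1-bb) * t^(bb-1)) l (𝓝 1) := by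
        refine tendsto_const_nhds.congr' ?_
        filter_upwards [hIoo] with t ht
        rw [← Real.rpow_add ht.1]
        norm_num
      have h0 := tendsto_nhds_unique hprod hconst
      norm_num at h0
  subst hbb
  refine ⟨rfl, ?_⟩
  have hconst : Tendsto (fun t : ℝ => t^((1:ℝ)-1)) l (𝓝 1) := by
    refine tendsto_const_nhds.congr fun t => ?_
    norm_num
  exact tendsto_nhds_unique hK hconst

example : True := trivial

set_option maxHeartbeats 2000000 in
lemma core {a b c d : ℝ} (hb : b < a) (hd : d < c) (ha0 : a ≠ 0) (hb0 : b ≠ 0)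
    (hc0 : c ≠ 0) (hd0 : d ≠ 0) (hbd : b ≤ d)
    (heq : ∀ t ∈ Ioo (0:ℝ) 1, S a b 1 t + S c d 1 t = 1 + t) :
    a = 2 ∧ b = 1 ∧ c = 2 ∧ d = 1 := by
  have hone : Tendsto (fun t : ℝ => 1 + t) l (𝓝 1) := by
    have h : Tendsto (fun t : ℝ => 1 + t) (𝓝 0) (𝓝 1) := by
      simpa [Pi.add_def] using (continuous_const.add continuous_id).tendsto (0:ℝ)
    exact h.mono_left nhdsWithin_le_nhds
  have hsum1 : Tendsto (fun t => S a b 1 t + S c d 1 t) l (𝓝 1) :=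
    hone.congr' (by filter_upwards [hIoo] with t ht using (heq t ht).symm)
  -- Step 1 : positivity of parameters
  have hbpos : 0 < b := by
    rcases lt_or_gt_of_ne hb0 with hbneg | hbpos
    · exfalso
      have hA : Tendsto (fun t => S a b 1 t) l (𝓝 0) := limS_zero hbneg ha0 hb
      rcases lt_or_gt_of_ne hd0 with hdneg | hdpos
      · have hB : Tendsto (fun t => S c d 1 t) l (𝓝 0) := limS_zero hdneg hc0 hd
        have h0 := tendsto_nhds_unique (hA.add hB) hsum1
        norm_num at h0
      · have hB := limS_pos hdpos hd
        have h0 := tendsto_nhds_unique (hA.add hB) hsum1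
        rw [zero_add] at h0
        have hlt : (d/c)^(1/(c-d)) < 1 :=
          Real.rpow_lt_one (div_pos hdpos (hdpos.trans hd)).le
            ((div_lt_one (hdpos.trans hd)).mpr hd)
            (one_div_pos.mpr (sub_pos.mpr hd))
        linarith
    · exact hbpos
  have hdpos : 0 < d := lt_of_lt_of_le hbpos hbd
  have hapos : 0 < a := hbpos.trans hb
  have hcpos : 0 < c := hdpos.trans hd
  have hab_pos : 0 < a - b := sub_pos.mpr hb
  have hcd_pos : 0 < c - d := sub_pos.mpr hd
  have hsum0 : (b/a)^(1/(a-b)) + (d/c)^(1/(c-d)) = 1 :=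
    tendsto_nhds_unique ((limS_pos hbpos hb).add (limS_pos hdpos hd)) hsum1
  have hal_pos : 0 < (b/a)^(1/(a-b)) := Real.rpow_pos_of_pos (by positivity) _
  have hbe_pos : 0 < (d/c)^(1/(c-d)) := Real.rpow_pos_of_pos (by positivity) _
  have hGA := limA hbpos hb
  have hGC := limA hdpos hd
  have hexact : ∀ t ∈ Ioo (0:ℝ) 1,
      (S a b 1 t - (b/a)^(1/(a-b))) + (S c d 1 t - (d/c)^(1/(c-d))) = t := by
    intro t ht
    have h := heq t ht
    linarith
  rcases eq_or_lt_of_le hbd with hbd_eq | hbd_lt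
  · -- Case b = d
    subst hbd_eq
    have hK : Tendsto (fun t : ℝ => t^(1-b)) l
        (𝓝 ((b/a)^(1/(a-b)) * (1/(a-b)) + (b/c)^(1/(c-b)) * (1/(c-b)))) := by
      refine (hGA.add hGC).congr' ?_
      filter_upwards [hIoo] with t ht
      rw [← add_div, hexact t ht, Real.rpow_sub ht.1, Real.rpow_one]
    have hKpos : 0 < (b/a)^(1/(a-b)) * (1/(a-b)) + (b/c)^(1/(c-b)) * (1/(c-b)) :=
      add_pos (mul_pos hal_pos (one_div_pos.mpr hab_pos))
        (mul_pos hbe_pos (one_div_pos.mpr hcd_pos))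
    obtain ⟨hb1, hK1⟩ := exponent_eq_one hKpos hK
    subst hb1
    have ha1 : 1 < a := hb
    have hc1 : 1 < c := hd
    have hEx2 : ∀ t ∈ Ioo (0:ℝ) 1,
        (S a 1 1 t - (1/a)^(1/(a-1)) - (1/a)^(1/(a-1)) * (1/(a-1)) * t)
        + (S c 1 1 t - (1/c)^(1/(c-1)) - (1/c)^(1/(c-1)) * (1/(c-1)) * t) = 0 := by
      intro t ht
      linear_combination hexact t ht - t * hK1
    have hmuA_pos : 0 < (1/a)^(1/(a-1)) * (1/(a-1)) :=
      mul_pos (Real.rpow_pos_of_pos (by positivity) _) (one_div_pos.mpr (by linarith))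
    have hmuC_pos : 0 < (1/c)^(1/(c-1)) * (1/(c-1)) :=
      mul_pos (Real.rpow_pos_of_pos (by positivity) _) (one_div_pos.mpr (by linarith))
    by_cases ha2 : a = 2
    · subst ha2
      have hS2 : ∀ t ∈ Ioo (0:ℝ) 1,
          S 2 1 1 t - (1/2)^(1/((2:ℝ)-1)) - (1/2)^(1/((2:ℝ)-1)) * (1/((2:ℝ)-1)) * t = 0 := by
        intro t ht
        rw [S21_one ht, show (1:ℝ)/((2:ℝ)-1) = 1 by norm_num, Real.rpow_one]
        ring
      have hCzero : ∀ t ∈ Ioo (0:ℝ) 1,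
          S c 1 1 t - (1/c)^(1/(c-1)) - (1/c)^(1/(c-1)) * (1/(c-1)) * t = 0 := by
        intro t ht
        have h1 := hEx2 t ht
        have h2 := hS2 t ht
        linarith
      have hc2 : c = 2 := by
        by_contra hc2
        rcases lt_or_gt_of_ne hc2 with hlt | hgt
        · have hL := limB_lt hc1 hlt
          have hzero : Tendsto (fun t => (S c 1 1 t - (1/c)^(1/(c-1))
              - (1/c)^(1/(c-1)) * (1/(c-1)) * t)/t^c) l (𝓝 0) := by
            refine tendsto_const_nhds.congr' ?_
            filter_upwards [hIoo] with t ht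
            rw [hCzero t ht, zero_div]
          have h0 := tendsto_nhds_unique hL hzero
          linarith
        · have hL := limB_gt hgt
          have hzero : Tendsto (fun t => (S c 1 1 t - (1/c)^(1/(c-1))
              - (1/c)^(1/(c-1)) * (1/(c-1)) * t)/(t*t)) l (𝓝 0) := by
            refine tendsto_const_nhds.congr' ?_
            filter_upwards [hIoo] with t ht
            rw [hCzero t ht, zero_div]
          have h0 := tendsto_nhds_unique hL hzero
          have hpos : 0 < (1/c)^(1/(c-1)) * (1/(c-1)) * ((1/(c-1)) + 1)/2 := by
            have h1 : 0 < (1/(c-1)) + 1 := by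
              have := one_div_pos.mpr (by linarith : (0:ℝ) < c - 1)
              linarith
            positivity
          linarith
      exact ⟨rfl, rfl, hc2, rfl⟩
    · exfalso
      have hflip : ∀ (e L : ℝ), Tendsto (fun t => (S c 1 1 t - (1/c)^(1/(c-1))
          - (1/c)^(1/(c-1)) * (1/(c-1)) * t)/t^e) l (𝓝 L) →
          Tendsto (fun t => (S a 1 1 t - (1/a)^(1/(a-1))
          - (1/a)^(1/(a-1)) * (1/(a-1)) * t)/t^e) l (𝓝 (-L)) := by
        intro e L hT
        refine hT.neg.congr' ?_
        filter_upwards [hIoo] with t ht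
        have h3 := hEx2 t ht
        rw [← neg_div]
        congr 1
        linarith
      by_cases hc2 : c = 2
      · -- then a-term is identically 0, contradicting a ≠ 2
        subst hc2
        have hS2 : ∀ t ∈ Ioo (0:ℝ) 1,
            S 2 1 1 t - (1/2)^(1/((2:ℝ)-1)) - (1/2)^(1/((2:ℝ)-1)) * (1/((2:ℝ)-1)) * t = 0 := by
          intro t ht
          rw [S21_one ht, show (1:ℝ)/((2:ℝ)-1) = 1 by norm_num, Real.rpow_one]
          ring
        have hAzero : ∀ t ∈ Ioo (0:ℝ) 1,
            S a 1 1 t - (1/a)^(1/(a-1)) - (1/a)^(1/(a-1)) * (1/(a-1)) * t = 0 := by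
          intro t ht
          have h1 := hEx2 t ht
          have h2 := hS2 t ht
          linarith
        rcases lt_or_gt_of_ne ha2 with hlt | hgt
        · have hL := limB_lt ha1 hlt
          have hzero : Tendsto (fun t => (S a 1 1 t - (1/a)^(1/(a-1))
              - (1/a)^(1/(a-1)) * (1/(a-1)) * t)/t^a) l (𝓝 0) := by
            refine tendsto_const_nhds.congr' ?_
            filter_upwards [hIoo] with t ht
            rw [hAzero t ht, zero_div]
          have h0 := tendsto_nhds_unique hL hzero
          linarith
        · have hL := limB_gt hgt
          have hzero : Tendsto (fun t => (S a 1 1 t - (1/a)^(1/(a-1))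
              - (1/a)^(1/(a-1)) * (1/(a-1)) * t)/(t*t)) l (𝓝 0) := by
            refine tendsto_const_nhds.congr' ?_
            filter_upwards [hIoo] with t ht
            rw [hAzero t ht, zero_div]
          have h0 := tendsto_nhds_unique hL hzero
          have hpos : 0 < (1/a)^(1/(a-1)) * (1/(a-1)) * ((1/(a-1)) + 1)/2 := by
            have h1 : 0 < (1/(a-1)) + 1 := by
              have := one_div_pos.mpr (by linarith : (0:ℝ) < a - 1)
              linarith
            positivity
          linarith
      · -- both a ≠ 2 and c ≠ 2
        rcases lt_or_gt_of_ne ha2 with haL | haG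
        · rcases lt_or_gt_of_ne hc2 with hcL | hcG
          · -- a < 2, c < 2
            have hFc := hflip c _ (limB_lt hc1 hcL)
            rw [neg_neg] at hFc
            rcases lt_trichotomy a c with h | h | h
            · have h0 := compare_exponents h (limB_lt ha1 haL) hFc
              linarith
            · subst h
              have h0 := tendsto_nhds_unique (limB_lt ha1 haL) hFc
              linarith
            · have h0 := compare_exponents h hFc (limB_lt ha1 haL)
              linarith
          · -- a < 2 < c
            have hgt2 : Tendsto (fun t => (S c 1 1 t - (1/c)^(1/(c-1))
                - (1/c)^(1/(c-1)) * (1/(c-1)) * t)/t^(2:ℝ)) l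
                (𝓝 ((1/c)^(1/(c-1)) * (1/(c-1)) * ((1/(c-1)) + 1)/2)) := by
              refine (limB_gt hcG).congr fun t => ?_
              rw [rpow_two']
            have hFc := hflip 2 _ hgt2
            have h0 := compare_exponents haL (limB_lt ha1 haL) hFc
            linarith
        · rcases lt_or_gt_of_ne hc2 with hcL | hcG
          · -- c < 2 < a
            have hFc := hflip c _ (limB_lt hc1 hcL)
            rw [neg_neg] at hFc
            have hA2 : Tendsto (fun t => (S a 1 1 t - (1/a)^(1/(a-1))
                - (1/a)^(1/(a-1)) * (1/(a-1)) * t)/t^(2:ℝ)) l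
                (𝓝 ((1/a)^(1/(a-1)) * (1/(a-1)) * ((1/(a-1)) + 1)/2)) := by
              refine (limB_gt haG).congr fun t => ?_
              rw [rpow_two']
            have h0 := compare_exponents hcL hFc hA2
            linarith
          · -- 2 < a, 2 < c
            have hgt2 : Tendsto (fun t => (S c 1 1 t - (1/c)^(1/(c-1))
                - (1/c)^(1/(c-1)) * (1/(c-1)) * t)/t^(2:ℝ)) l
                (𝓝 ((1/c)^(1/(c-1)) * (1/(c-1)) * ((1/(c-1)) + 1)/2)) := by
              refine (limB_gt hcG).congr fun t => ?_
              rw [rpow_two']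
            have hFc := hflip 2 _ hgt2
            have hA2 : Tendsto (fun t => (S a 1 1 t - (1/a)^(1/(a-1))
                - (1/a)^(1/(a-1)) * (1/(a-1)) * t)/t^(2:ℝ)) l
                (𝓝 ((1/a)^(1/(a-1)) * (1/(a-1)) * ((1/(a-1)) + 1)/2)) := by
              refine (limB_gt haG).congr fun t => ?_
              rw [rpow_two']
            have h0 := tendsto_nhds_unique hA2 hFc
            have hpos1 : 0 < (1/a)^(1/(a-1)) * (1/(a-1)) * ((1/(a-1)) + 1)/2 := by
              have h1 : 0 < (1/(a-1)) + 1 := by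
                have := one_div_pos.mpr (by linarith : (0:ℝ) < a - 1)
                linarith
              positivity
            have hpos2 : 0 < (1/c)^(1/(c-1)) * (1/(c-1)) * ((1/(c-1)) + 1)/2 := by
              have h1 : 0 < (1/(c-1)) + 1 := by
                have := one_div_pos.mpr (by linarith : (0:ℝ) < c - 1)
                linarith
              positivity
            linarith

  · -- Case b < d
    have hK : Tendsto (fun t : ℝ => t^(1-b)) l (𝓝 ((b/a)^(1/(a-b)) * (1/(a-b)))) := by
      have h2 : Tendsto (fun t => (S c d 1 t - (d/c)^(1/(c-d)))/t^d * t^(d-b)) l (𝓝 0) := by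
        have := hGC.mul (T0 (by linarith : (0:ℝ) < d - b))
        simpa using this
      have hsum := hGA.add h2
      rw [add_zero] at hsum
      refine hsum.congr' ?_
      filter_upwards [hIoo] with t ht
      have htb : t^b ≠ 0 := (Real.rpow_pos_of_pos ht.1 b).ne'
      have htd : t^d ≠ 0 := (Real.rpow_pos_of_pos ht.1 d).ne'
      have hstep : (S c d 1 t - (d/c)^(1/(c-d)))/t^d * t^(d-b)
          = (S c d 1 t - (d/c)^(1/(c-d)))/t^b := by
        rw [Real.rpow_sub ht.1]
        field_simp
      rw [hstep, ← add_div, hexact t ht, Real.rpow_sub ht.1, Real.rpow_one]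
    obtain ⟨hb1, hK1⟩ := exponent_eq_one
      (mul_pos hal_pos (one_div_pos.mpr hab_pos)) hK
    subst hb1
    exfalso
    have ha1 : 1 < a := hb
    have hd1 : 1 < d := hbd_lt
    have hmuC_pos : 0 < (d/c)^(1/(c-d)) * (1/(c-d)) :=
      mul_pos hbe_pos (one_div_pos.mpr hcd_pos)
    have ha2 : a ≠ 2 := by
      intro h
      rw [h, show (1:ℝ)/((2:ℝ)-1) = 1 by norm_num, Real.rpow_one] at hK1
      norm_num at hK1
    have hEx1 : ∀ t ∈ Ioo (0:ℝ) 1,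
        S c d 1 t - (d/c)^(1/(c-d))
          = -(S a 1 1 t - (1/a)^(1/(a-1)) - (1/a)^(1/(a-1)) * (1/(a-1)) * t) := by
      intro t ht
      linear_combination hexact t ht - t * hK1
    have hFd : Tendsto (fun t => (S a 1 1 t - (1/a)^(1/(a-1))
        - (1/a)^(1/(a-1)) * (1/(a-1)) * t)/t^d) l
        (𝓝 (-((d/c)^(1/(c-d)) * (1/(c-d))))) := by
      refine (limA hdpos hd).neg.congr' ?_
      filter_upwards [hIoo] with t ht
      rw [← neg_div, hEx1 t ht, neg_neg]
    rcases lt_or_gt_of_ne ha2 with haL | haG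
    · -- 1 < a < 2
      have hFa := limB_lt ha1 haL
      rcases lt_trichotomy d a with h | h | h
      · have h0 := compare_exponents h hFd hFa
        linarith
      · -- d = a : the entropy case
        subst h
        have huni := tendsto_nhds_unique hFd hFa
        have hβμ : (d/c)^(1/(c-d)) * (1/(c-d)) = 1 := by linarith
        -- α = a - 1 (recall a = d here, d is the variable kept)
        have hd2 : d < 2 := haL
        have hane : d - 1 ≠ 0 := by intro h; rw [sub_eq_zero] at h; exact (by linarith : (1:ℝ) < d).ne' h
        have hαval : (1/d)^(1/(d-1)) = d - 1 := by
          rw [mul_one_div, div_eq_one_iff_eq hane] at hK1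
          exact hK1
        have hβval : (d/c)^(1/(c-d)) = c - d := by
          rw [mul_one_div, div_eq_one_iff_eq (sub_ne_zero.mpr hd.ne')] at hβμ
          exact hβμ
        have hc2 : c = 2 := by
          rw [hαval, hβval] at hsum0
          linarith
        subst hc2
        -- now (1/d)^(1/(d-1)) = d-1 and (d/2)^(1/(2-d)) = 2-d
        have hu0 : (0:ℝ) < d - 1 := by linarith
        have hu1 : d - 1 < 1 := by linarith
        have hloga : -(Real.log d) = (d-1) * Real.log (d-1) := by
          have h1 := congrArg Real.log hαval
          rw [Real.log_rpow (by positivity : (0:ℝ) < 1/d), one_div d, Real.log_inv] at h1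
          have h2 : (1/(d-1)) * -(Real.log d) = Real.log (d-1) := h1
          field_simp at h2
          linarith
        have hlogc : Real.log d - Real.log 2 = (2-d) * Real.log (2-d) := by
          have h1 := congrArg Real.log hβval
          rw [Real.log_rpow (by positivity : (0:ℝ) < d/2),
            Real.log_div (by positivity : d ≠ 0) (by norm_num : (2:ℝ) ≠ 0)] at h1
          have h2 : (1/(2-d)) * (Real.log d - Real.log 2) = Real.log (2-d) := h1
          have h2d : (2:ℝ) - d ≠ 0 := by intro h; rw [sub_eq_zero] at h; linarith
          field_simp at h2
          linarith
        have hcomb : (d-1) * Real.log (d-1) + (2-d) * Real.log (2-d) = -Real.log 2 := by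
          linarith
        rcases eq_or_ne d (3/2) with h32 | h32
        · rw [h32] at hloga
          norm_num at hloga
          -- hloga : -(log (3/2)) = (1/2) * log (1/2)  (in some normal form)
          have hlog2 : Real.log ((3/2:ℝ)^(2:ℕ)) = Real.log 2 := by
            rw [Real.log_pow]
            push_cast
            have hl12 : Real.log (2⁻¹:ℝ) = -Real.log 2 := Real.log_inv 2
            nlinarith [hloga, hl12]
          have h9 := Real.log_injOn_pos (Set.mem_Ioi.mpr (by norm_num : (0:ℝ) < (3/2:ℝ)^(2:ℕ)))
            (Set.mem_Ioi.mpr (by norm_num : (0:ℝ) < 2)) hlog2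
          norm_num at h9
        · have hne : d - 1 ≠ 1/2 := fun h => h32 (by linarith)
          have hent := entropy hu0 hu1 hne
          have h2a : 1 - (d-1) = 2 - d := by ring
          rw [h2a] at hent
          linarith
      · have h0 := compare_exponents h hFa hFd
        rw [show -((1/a)^(1/(a-1)) * (1/(a-1))) = -1 by rw [hK1]] at h0
        norm_num at h0
    · -- 2 < a
      have hFa : Tendsto (fun t => (S a 1 1 t - (1/a)^(1/(a-1))
          - (1/a)^(1/(a-1)) * (1/(a-1)) * t)/t^(2:ℝ)) l
          (𝓝 ((1/a)^(1/(a-1)) * (1/(a-1)) * ((1/(a-1)) + 1)/2)) := by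
        refine (limB_gt haG).congr fun t => ?_
        rw [rpow_two']
      have hposA : 0 < (1/a)^(1/(a-1)) * (1/(a-1)) * ((1/(a-1)) + 1)/2 := by
        have h1 : 0 < (1/(a-1)) + 1 := by
          have := one_div_pos.mpr (by linarith : (0:ℝ) < a - 1)
          linarith
        have h2 : 0 < (1/a)^(1/(a-1)) * (1/(a-1)) :=
          mul_pos (Real.rpow_pos_of_pos (by positivity) _) (one_div_pos.mpr (by linarith))
        positivity
      rcases lt_trichotomy d 2 with h | h | h
      · have h0 := compare_exponents h hFd hFa
        linarith
      · rw [h] at hFd hmuC_pos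
        have h0 := tendsto_nhds_unique hFd hFa
        linarith
      · have h0 := compare_exponents h hFa hFd
        linarith


example : True := trivial

lemma S21_gen {x y : ℝ} (hx : 0 < x) (hy : 0 < y) (hxy : x ≠ y) : S 2 1 x y = (x+y)/2 := by
  unfold S
  rw [show (1:ℝ)/(2-1) = 1 by norm_num, Real.rpow_one, Real.rpow_one, Real.rpow_one,
    rpow_two', rpow_two']
  have hxy' : x - y ≠ 0 := sub_ne_zero.mpr hxy
  field_simp
  ring

lemma S12_gen {x y : ℝ} (hx : 0 < x) (hy : 0 < y) (hxy : x ≠ y) : S 1 2 x y = (x+y)/2 := by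
  unfold S
  rw [show (1:ℝ)/(1-2) = -1 by norm_num, Real.rpow_neg_one, Real.rpow_one, Real.rpow_one,
    rpow_two', rpow_two']
  have hxy' : x - y ≠ 0 := sub_ne_zero.mpr hxy
  have hxy2 : x + y ≠ 0 := by positivity
  rw [show x*x - y*y = (x-y)*(x+y) by ring]
  field_simp

lemma core' {a b c d : ℝ} (hb : b < a) (hd : d < c) (ha0 : a ≠ 0) (hb0 : b ≠ 0)
    (hc0 : c ≠ 0) (hd0 : d ≠ 0)
    (heq : ∀ t ∈ Ioo (0:ℝ) 1, S a b 1 t + S c d 1 t = 1 + t) :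
    a = 2 ∧ b = 1 ∧ c = 2 ∧ d = 1 := by
  rcases le_total b d with h | h
  · exact core hb hd ha0 hb0 hc0 hd0 h heq
  · have heq' : ∀ t ∈ Ioo (0:ℝ) 1, S c d 1 t + S a b 1 t = 1 + t := by
      intro t ht; rw [add_comm]; exact heq t ht
    obtain ⟨h1, h2, h3, h4⟩ := core hd hb hc0 hd0 ha0 hb0 h heq'
    exact ⟨h3, h4, h1, h2⟩

lemma core'' {a b c d : ℝ} (hab : a ≠ b) (hcd : c ≠ d) (ha0 : a ≠ 0) (hb0 : b ≠ 0)
    (hc0 : c ≠ 0) (hd0 : d ≠ 0)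
    (heq : ∀ t ∈ Ioo (0:ℝ) 1, S a b 1 t + S c d 1 t = 1 + t) :
    ((a = 2 ∧ b = 1) ∨ (a = 1 ∧ b = 2)) ∧ ((c = 2 ∧ d = 1) ∨ (c = 1 ∧ d = 2)) := by
  rcases lt_or_gt_of_ne hab with h1 | h1 <;> rcases lt_or_gt_of_ne hcd with h2 | h2
  · -- a < b, c < d
    have heq' : ∀ t ∈ Ioo (0:ℝ) 1, S b a 1 t + S d c 1 t = 1 + t := by
      intro t ht
      rw [S_symm ht ha0 hb0 hab, S_symm ht hc0 hd0 hcd]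
      exact heq t ht
    obtain ⟨x1, x2, x3, x4⟩ := core' h1 h2 hb0 ha0 hd0 hc0 heq'
    exact ⟨Or.inr ⟨x2, x1⟩, Or.inr ⟨x4, x3⟩⟩
  · have heq' : ∀ t ∈ Ioo (0:ℝ) 1, S b a 1 t + S c d 1 t = 1 + t := by
      intro t ht
      rw [S_symm ht ha0 hb0 hab]
      exact heq t ht
    obtain ⟨x1, x2, x3, x4⟩ := core' h1 h2 hb0 ha0 hc0 hd0 heq'
    exact ⟨Or.inr ⟨x2, x1⟩, Or.inl ⟨x3, x4⟩⟩
  · have heq' : ∀ t ∈ Ioo (0:ℝ) 1, S a b 1 t + S d c 1 t = 1 + t := by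
      intro t ht
      rw [S_symm ht hc0 hd0 hcd]
      exact heq t ht
    obtain ⟨x1, x2, x3, x4⟩ := core' h1 h2 ha0 hb0 hd0 hc0 heq'
    exact ⟨Or.inl ⟨x1, x2⟩, Or.inr ⟨x4, x3⟩⟩
  · obtain ⟨x1, x2, x3, x4⟩ := core' h1 h2 ha0 hb0 hc0 hd0 heq
    exact ⟨Or.inl ⟨x1, x2⟩, Or.inl ⟨x3, x4⟩⟩

theorem matkowski_suto (a b c d : ℝ) (hab : a * b * (a - b) ≠ 0)
    (hcd : c * d * (c - d) ≠ 0) :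
    (∀ x y : ℝ, 0 < x → 0 < y → Sfull a b x y + Sfull c d x y = x + y) ↔
      ((a = 2 ∧ b = 1) ∨ (a = 1 ∧ b = 2)) ∧
      ((c = 2 ∧ d = 1) ∨ (c = 1 ∧ d = 2)) := by
  have ha0 : a ≠ 0 := fun h => hab (by rw [h]; ring)
  have hb0 : b ≠ 0 := fun h => hab (by rw [h]; ring)
  have hc0 : c ≠ 0 := fun h => hcd (by rw [h]; ring)
  have hd0 : d ≠ 0 := fun h => hcd (by rw [h]; ring)
  have hab' : a ≠ b := fun h => hab (by rw [h]; ring)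
  have hcd' : c ≠ d := fun h => hcd (by rw [h]; ring)
  constructor
  · intro hP
    have heq0 : ∀ t ∈ Ioo (0:ℝ) 1, S a b 1 t + S c d 1 t = 1 + t := by
      intro t ht
      have h := hP 1 t one_pos ht.1
      have hne : (1:ℝ) ≠ t := (ne_of_lt ht.2).symm
      rw [Sfull, Sfull, if_neg hne, if_neg hne] at h
      exact h
    exact core'' hab' hcd' ha0 hb0 hc0 hd0 heq0
  · rintro ⟨h1, h2⟩ x y hx hy
    by_cases hxy : x = y
    · subst hxy
      simp [Sfull]
    · rw [Sfull, Sfull, if_neg hxy, if_neg hxy]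
      have e1 : S a b x y = (x+y)/2 := by
        rcases h1 with ⟨r1, r2⟩ | ⟨r1, r2⟩ <;> subst r1 <;> subst r2
        · exact S21_gen hx hy hxy
        · exact S12_gen hx hy hxy
      have e2 : S c d x y = (x+y)/2 := by
        rcases h2 with ⟨r1, r2⟩ | ⟨r1, r2⟩ <;> subst r1 <;> subst r2
        · exact S21_gen hx hy hxy
        · exact S12_gen hx hy hxy
      rw [e1, e2]
      ring
end

section
/- If a, b, c, d ∈ ℝ satisfy S_{a,b}(x,y) = S_{c,d}(x,y) for all positive x, y, with ab(a−b) ≠ 0 and cd(c−d) ≠ 0, then either a + b = c + d = 0 (both means are the geometric mean) or {a,b} = {c,d}. -/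
open Real

namespace StolAux

lemma summable_phi (u : ℝ) : Summable (fun n : ℕ => u ^ n / ((Nat.factorial (n+1)) : ℝ)) := by
  apply Summable.of_norm_bounded (Real.summable_pow_div_factorial |u|)
  intro n
  rw [norm_div, norm_pow, Real.norm_eq_abs, Real.norm_eq_abs,
    abs_of_nonneg (by positivity : (0:ℝ) ≤ ((Nat.factorial (n+1)) : ℝ))]
  gcongr
  omega

noncomputable def Phi (u : ℝ) : ℝ := ∑' n : ℕ, u ^ n / ((Nat.factorial (n+1)) : ℝ)

lemma exp_eq_tsum (u : ℝ) : Real.exp u = ∑' n : ℕ, u ^ n / ((Nat.factorial n) : ℝ) := by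
  rw [Real.exp_eq_exp_ℝ, NormedSpace.exp_eq_tsum_div]

lemma mul_phi (u : ℝ) : u * Phi u = Real.exp u - 1 := by
  have h1 : u * Phi u = ∑' n : ℕ, u ^ (n+1) / ((Nat.factorial (n+1)) : ℝ) := by
    rw [Phi, ← tsum_mul_left]
    exact tsum_congr fun n => by rw [pow_succ]; ring
  have h2 : Real.exp u = u ^ 0 / ((Nat.factorial 0) : ℝ) + ∑' n : ℕ, u ^ (n+1) / ((Nat.factorial (n+1)) : ℝ) := by
    rw [exp_eq_tsum]
    exact Summable.tsum_eq_zero_add (by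
      have := Real.summable_pow_div_factorial u
      exact_mod_cast this)
  rw [h1]
  simp at h2
  linarith

lemma phi_zero : Phi 0 = 1 := by
  rw [Phi, tsum_eq_single 0 (fun n hn => by simp [zero_pow hn])]
  simp

lemma phi_pos (u : ℝ) : 0 < Phi u := by
  rcases eq_or_ne u 0 with rfl | hu
  · rw [phi_zero]; norm_num
  · have hm := mul_phi u
    have : Phi u = (Real.exp u - 1) / u := by field_simp; linarith
    rw [this]
    rcases lt_or_gt_of_ne hu with hneg | hpos
    · apply div_pos_of_neg_of_neg <;> nlinarith [Real.exp_lt_one_iff.mpr hneg]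
    · apply div_pos _ hpos
      nlinarith [Real.add_one_le_exp u]


noncomputable def phiSeries : FormalMultilinearSeries ℝ ℝ ℝ :=
  fun n => (((Nat.factorial (n+1)) : ℝ)⁻¹) • ContinuousMultilinearMap.mkPiAlgebraFin ℝ n ℝ

lemma phiSeries_apply (n : ℕ) (u : ℝ) :
    (phiSeries n) (fun _ => u) = u ^ n / ((Nat.factorial (n+1)) : ℝ) := by
  simp [phiSeries, ContinuousMultilinearMap.mkPiAlgebraFin_apply, List.prod_ofFn,
    div_eq_inv_mul]

lemma phiSeries_norm (n : ℕ) : ‖phiSeries n‖ = ((Nat.factorial (n+1)) : ℝ)⁻¹ := by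
  rw [phiSeries]
  rw [norm_smul (((Nat.factorial (n+1)) : ℝ)⁻¹) (ContinuousMultilinearMap.mkPiAlgebraFin ℝ n ℝ)]
  rw [ContinuousMultilinearMap.norm_mkPiAlgebraFin]
  simp [abs_of_nonneg]

lemma phiSeries_radius : phiSeries.radius = ⊤ := by
  apply FormalMultilinearSeries.radius_eq_top_of_summable_norm
  intro r
  apply Summable.of_nonneg_of_le (fun n => by positivity)
    (fun n => ?_) (Real.summable_pow_div_factorial r)
  rw [phiSeries_norm]
  rw [div_eq_inv_mul]
  gcongr
  omega

lemma hasFPS : HasFPowerSeriesOnBall Phi phiSeries 0 ⊤ := by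
  have h := phiSeries.hasFPowerSeriesOnBall (by rw [phiSeries_radius]; exact ENNReal.zero_lt_top)
  rw [phiSeries_radius] at h
  have : Phi = phiSeries.sum := by
    funext u
    rw [Phi, FormalMultilinearSeries.sum]
    exact (tsum_congr fun n => (phiSeries_apply n u).symm)
  rw [this]
  exact h

lemma contDiff_phi : ContDiff ℝ (⊤ : ℕ∞) Phi := by
  rw [contDiff_iff_contDiffAt]
  intro u
  exact (hasFPS.analyticAt_of_mem (by simp)).contDiffAt

lemma hasDerivAt_iter {f : ℝ → ℝ} (hf : ContDiff ℝ (⊤ : ℕ∞) f) (k : ℕ) (u : ℝ) :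
    HasDerivAt (iteratedDeriv k f) (iteratedDeriv (k+1) f u) u := by
  rw [iteratedDeriv_succ]
  have h1 : ContDiff ℝ (⊤ : ℕ∞) (iteratedDeriv k f) := by
    rw [iteratedDeriv_eq_iterate]
    exact hf.iterate_deriv k
  exact ((h1.differentiable (by simp)) u).hasDerivAt

lemma hasDerivAt_phi (k : ℕ) (u : ℝ) :
    HasDerivAt (iteratedDeriv k Phi) (iteratedDeriv (k+1) Phi u) u :=
  hasDerivAt_iter contDiff_phi k u

lemma phi_ident (k : ℕ) (u : ℝ) :
    ((k:ℝ)+1) * iteratedDeriv k Phi u + u * iteratedDeriv (k+1) Phi u = Real.exp u := by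
  induction k generalizing u with
  | zero =>
    have hphi : HasDerivAt Phi (iteratedDeriv 1 Phi u) u := by
      have := hasDerivAt_phi 0 u
      rwa [iteratedDeriv_zero] at this
    have hL : HasDerivAt (fun v => v * Phi v) (1 * Phi u + u * iteratedDeriv 1 Phi u) u :=
      (hasDerivAt_id u).mul hphi
    have hfun : (fun v => v * Phi v) = fun v => Real.exp v - 1 := funext mul_phi
    rw [hfun] at hL
    have hR : HasDerivAt (fun v => Real.exp v - 1) (Real.exp u) u :=
      (Real.hasDerivAt_exp u).sub_const 1
    have := hL.unique hR
    rw [iteratedDeriv_zero]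
    push_cast
    linarith
  | succ k ih =>
    have hL : HasDerivAt (fun v => ((k:ℝ)+1) * iteratedDeriv k Phi v + v * iteratedDeriv (k+1) Phi v)
        (((k:ℝ)+1) * iteratedDeriv (k+1) Phi u
          + (1 * iteratedDeriv (k+1) Phi u + u * iteratedDeriv (k+2) Phi u)) u :=
      ((hasDerivAt_phi k u).const_mul _).add ((hasDerivAt_id u).mul (hasDerivAt_phi (k+1) u))
    have hfun : (fun v => ((k:ℝ)+1) * iteratedDeriv k Phi v + v * iteratedDeriv (k+1) Phi v)
        = Real.exp := funext fun v => ih v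
    rw [hfun] at hL
    have := hL.unique (Real.hasDerivAt_exp u)
    push_cast
    linarith

lemma iteratedDeriv_phi_zero (k : ℕ) : iteratedDeriv k Phi 0 = 1/((k:ℝ)+1) := by
  have := phi_ident k 0
  rw [Real.exp_zero] at this
  have hk : ((k:ℝ)+1) ≠ 0 := by positivity
  field_simp
  linarith

noncomputable def HH (u : ℝ) : ℝ := Real.log (Phi u)

lemma contDiff_HH : ContDiff ℝ (⊤ : ℕ∞) HH := by
  rw [contDiff_iff_contDiffAt]
  intro u
  exact (Real.contDiffAt_log.mpr (phi_pos u).ne').comp u contDiff_phi.contDiffAt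

lemma hasDerivAt_HH (k : ℕ) (u : ℝ) :
    HasDerivAt (iteratedDeriv k HH) (iteratedDeriv (k+1) HH u) u :=
  hasDerivAt_iter contDiff_HH k u

lemma hasDerivAt_phi' (u : ℝ) : HasDerivAt Phi (iteratedDeriv 1 Phi u) u := by
  have := hasDerivAt_phi 0 u; rwa [iteratedDeriv_zero] at this

lemma J0 (u : ℝ) : iteratedDeriv 1 Phi u = iteratedDeriv 1 HH u * Phi u := by
  have hlog : HasDerivAt HH (iteratedDeriv 1 Phi u / Phi u) u :=
    (hasDerivAt_phi' u).log (phi_pos u).ne'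
  have hQ : HasDerivAt HH (iteratedDeriv 1 HH u) u := by
    have := hasDerivAt_HH 0 u; rwa [iteratedDeriv_zero] at this
  rw [hQ.unique hlog, div_mul_cancel₀ _ (phi_pos u).ne']

lemma J1 (u : ℝ) : iteratedDeriv 2 Phi u
    = iteratedDeriv 2 HH u * Phi u + iteratedDeriv 1 HH u * iteratedDeriv 1 Phi u := by
  have hL : HasDerivAt (iteratedDeriv 1 Phi) (iteratedDeriv 2 Phi u) u := hasDerivAt_phi 1 u
  have hR : HasDerivAt (fun v => iteratedDeriv 1 HH v * Phi v)
      (iteratedDeriv 2 HH u * Phi u + iteratedDeriv 1 HH u * iteratedDeriv 1 Phi u) u :=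
    (hasDerivAt_HH 1 u).mul (hasDerivAt_phi' u)
  have hfun : (iteratedDeriv 1 Phi) = fun v => iteratedDeriv 1 HH v * Phi v := funext J0
  rw [hfun] at hL
  exact hL.unique hR

lemma J2 (u : ℝ) : iteratedDeriv 3 Phi u
    = iteratedDeriv 3 HH u * Phi u + 2 * (iteratedDeriv 2 HH u * iteratedDeriv 1 Phi u)
      + iteratedDeriv 1 HH u * iteratedDeriv 2 Phi u := by
  have hL : HasDerivAt (iteratedDeriv 2 Phi) (iteratedDeriv 3 Phi u) u := hasDerivAt_phi 2 u
  have hR : HasDerivAt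
      (fun v => iteratedDeriv 2 HH v * Phi v + iteratedDeriv 1 HH v * iteratedDeriv 1 Phi v)
      ((iteratedDeriv 3 HH u * Phi u + iteratedDeriv 2 HH u * iteratedDeriv 1 Phi u)
        + (iteratedDeriv 2 HH u * iteratedDeriv 1 Phi u
            + iteratedDeriv 1 HH u * iteratedDeriv 2 Phi u)) u := by
    exact ((hasDerivAt_HH 2 u).mul (hasDerivAt_phi' u)).add
      ((hasDerivAt_HH 1 u).mul (hasDerivAt_phi 1 u))
  have hfun : (iteratedDeriv 2 Phi)
      = fun v => iteratedDeriv 2 HH v * Phi v + iteratedDeriv 1 HH v * iteratedDeriv 1 Phi v :=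
    funext J1
  rw [hfun] at hL
  have := hL.unique hR
  rw [this]; ring

lemma J3 (u : ℝ) : iteratedDeriv 4 Phi u
    = iteratedDeriv 4 HH u * Phi u + 3 * (iteratedDeriv 3 HH u * iteratedDeriv 1 Phi u)
      + 3 * (iteratedDeriv 2 HH u * iteratedDeriv 2 Phi u)
      + iteratedDeriv 1 HH u * iteratedDeriv 3 Phi u := by
  have hL : HasDerivAt (iteratedDeriv 3 Phi) (iteratedDeriv 4 Phi u) u := hasDerivAt_phi 3 u
  have hR : HasDerivAt
      (fun v => iteratedDeriv 3 HH v * Phi v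
        + 2 * (iteratedDeriv 2 HH v * iteratedDeriv 1 Phi v)
        + iteratedDeriv 1 HH v * iteratedDeriv 2 Phi v)
      ((iteratedDeriv 4 HH u * Phi u + iteratedDeriv 3 HH u * iteratedDeriv 1 Phi u)
        + 2 * (iteratedDeriv 3 HH u * iteratedDeriv 1 Phi u
            + iteratedDeriv 2 HH u * iteratedDeriv 2 Phi u)
        + (iteratedDeriv 2 HH u * iteratedDeriv 2 Phi u
            + iteratedDeriv 1 HH u * iteratedDeriv 3 Phi u)) u := by
    exact (((hasDerivAt_HH 3 u).mul (hasDerivAt_phi' u)).add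
      (((hasDerivAt_HH 2 u).mul (hasDerivAt_phi 1 u)).const_mul (2:ℝ))).add
      ((hasDerivAt_HH 1 u).mul (hasDerivAt_phi 2 u))
  have hfun : (iteratedDeriv 3 Phi)
      = fun v => iteratedDeriv 3 HH v * Phi v
        + 2 * (iteratedDeriv 2 HH v * iteratedDeriv 1 Phi v)
        + iteratedDeriv 1 HH v * iteratedDeriv 2 Phi v := funext J2
  rw [hfun] at hL
  have := hL.unique hR
  rw [this]; ring

lemma Q1_zero : iteratedDeriv 1 HH 0 = 1/2 := by
  have h := J0 0
  rw [phi_zero, iteratedDeriv_phi_zero 1, mul_one] at h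
  rw [← h]
  norm_num

lemma Q2_zero : iteratedDeriv 2 HH 0 = 1/12 := by
  have h := J1 0
  rw [phi_zero, iteratedDeriv_phi_zero 1, iteratedDeriv_phi_zero 2, Q1_zero] at h
  norm_num at h
  linarith

lemma Q3_zero : iteratedDeriv 3 HH 0 = 0 := by
  have h := J2 0
  rw [phi_zero, iteratedDeriv_phi_zero 1, iteratedDeriv_phi_zero 2, iteratedDeriv_phi_zero 3,
    Q1_zero, Q2_zero] at h
  norm_num at h
  linarith

lemma Q4_zero : iteratedDeriv 4 HH 0 = -(1/120) := by
  have h := J3 0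
  rw [phi_zero, iteratedDeriv_phi_zero 1, iteratedDeriv_phi_zero 2, iteratedDeriv_phi_zero 3,
    iteratedDeriv_phi_zero 4, Q1_zero, Q2_zero, Q3_zero] at h
  norm_num at h
  linarith


noncomputable def Kd (a b c d : ℝ) (n : ℕ) (t : ℝ) : ℝ :=
  (c-d) * (a^n * iteratedDeriv n HH (a*t) - b^n * iteratedDeriv n HH (b*t))
  - (a-b) * (c^n * iteratedDeriv n HH (c*t) - d^n * iteratedDeriv n HH (d*t))

lemma hasDerivAt_scaled (n : ℕ) (p t : ℝ) :
    HasDerivAt (fun s => p^n * iteratedDeriv n HH (p*s))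
      (p^(n+1) * iteratedDeriv (n+1) HH (p*t)) t := by
  have hc : HasDerivAt (fun s : ℝ => p * s) p t := by
    simpa using (hasDerivAt_id t).const_mul p
  have := ((hasDerivAt_iter contDiff_HH n (p*t)).comp t hc).const_mul (p^n)
  exact this.congr_deriv (by ring)

lemma hasDerivAt_Kd (a b c d : ℝ) (n : ℕ) (t : ℝ) :
    HasDerivAt (Kd a b c d n) (Kd a b c d (n+1) t) t := by
  unfold Kd
  exact (((hasDerivAt_scaled n a t).sub (hasDerivAt_scaled n b t)).const_mul (c-d)).sub
    (((hasDerivAt_scaled n c t).sub (hasDerivAt_scaled n d t)).const_mul (a-b))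

lemma Kd_zero_on_pos (a b c d : ℝ) (hyp : ∀ t, 0 < t → Kd a b c d 0 t = 0) :
    ∀ n, ∀ t, 0 < t → Kd a b c d n t = 0 := by
  intro n
  induction n with
  | zero => exact hyp
  | succ n ih =>
    intro t ht
    have hev : Kd a b c d n =ᶠ[nhds t] (fun _ => (0:ℝ)) :=
      Filter.eventually_of_mem (Ioi_mem_nhds ht) (fun s hs => ih s hs)
    have h0 : HasDerivAt (Kd a b c d n) 0 t :=
      (hasDerivAt_const t (0:ℝ)).congr_of_eventuallyEq hev
    exact ((hasDerivAt_Kd a b c d n t).unique h0)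

lemma continuous_Kd (a b c d : ℝ) (n : ℕ) : Continuous (Kd a b c d n) := by
  have hcont : Continuous (iteratedDeriv n HH) := by
    rw [iteratedDeriv_eq_iterate]
    exact (contDiff_HH.iterate_deriv n).continuous
  unfold Kd
  fun_prop

lemma Kd_at_zero (a b c d : ℝ) (hyp : ∀ t, 0 < t → Kd a b c d 0 t = 0) (n : ℕ) :
    Kd a b c d n 0 = 0 := by
  have h1 : Filter.Tendsto (Kd a b c d n) (nhdsWithin 0 (Set.Ioi 0)) (nhds (Kd a b c d n 0)) :=
    ((continuous_Kd a b c d n).tendsto 0).mono_left nhdsWithin_le_nhds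
  have h2 : Filter.Tendsto (Kd a b c d n) (nhdsWithin 0 (Set.Ioi 0)) (nhds 0) := by
    apply Filter.Tendsto.congr' _ tendsto_const_nhds
    filter_upwards [self_mem_nhdsWithin] with s hs
    exact (Kd_zero_on_pos a b c d hyp n s hs).symm
  exact tendsto_nhds_unique h1 h2

lemma S_exp (p q t : ℝ) (hp : p ≠ 0) (hq : q ≠ 0) (hpq : p - q ≠ 0) (ht : t ≠ 0) :
    S p q (Real.exp t) 1 = Real.exp ((HH (p*t) - HH (q*t))/(p - q)) := by
  have hx : ∀ r : ℝ, (Real.exp t) ^ r = Real.exp (r * t) := by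
    intro r
    rw [Real.rpow_def_of_pos (Real.exp_pos t), Real.log_exp, mul_comm]
  rw [S, hx p, hx q, Real.one_rpow, Real.one_rpow]
  have h1 : q * (Real.exp (p*t) - 1) / (p * (Real.exp (q*t) - 1)) = Phi (p*t) / Phi (q*t) := by
    rw [← mul_phi (p*t), ← mul_phi (q*t),
      div_eq_div_iff (mul_ne_zero hp (mul_ne_zero (mul_ne_zero hq ht) (phi_pos (q*t)).ne')) (phi_pos (q*t)).ne']
    ring
  rw [h1, Real.rpow_def_of_pos (div_pos (phi_pos _) (phi_pos _)),
    Real.log_div (phi_pos _).ne' (phi_pos _).ne']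
  congr 1
  simp only [HH]
  field_simp



end StolAux

open StolAux in
theorem stolarsky_equality_characterization (a b c d : ℝ)
    (hab : a * b * (a - b) ≠ 0) (hcd : c * d * (c - d) ≠ 0)
    (h : ∀ x y : ℝ, 0 < x → 0 < y → Sfull a b x y = Sfull c d x y) :
    (a + b = 0 ∧ c + d = 0) ∨ ((a = c ∧ b = d) ∨ (a = d ∧ b = c)) := by
  have ha : a ≠ 0 := fun e => hab (by rw [e]; ring)
  have hb : b ≠ 0 := fun e => hab (by rw [e]; ring)
  have hab' : a - b ≠ 0 := fun e => hab (by rw [e]; ring)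
  have hc : c ≠ 0 := fun e => hcd (by rw [e]; ring)
  have hd : d ≠ 0 := fun e => hcd (by rw [e]; ring)
  have hcd' : c - d ≠ 0 := fun e => hcd (by rw [e]; ring)
  -- the key functional identity
  have hyp : ∀ t, 0 < t → Kd a b c d 0 t = 0 := by
    intro t ht
    have hx1 : Real.exp t ≠ 1 := by
      have := Real.exp_lt_exp.mpr ht
      rw [Real.exp_zero] at this
      exact (ne_of_gt this)
    have heq := h (Real.exp t) 1 (Real.exp_pos t) one_pos
    rw [Sfull, Sfull, if_neg hx1, if_neg hx1] at heq
    rw [S_exp a b t ha hb hab' (ne_of_gt ht), S_exp c d t hc hd hcd' (ne_of_gt ht)] at heq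
    have heq2 := Real.exp_injective heq
    rw [div_eq_div_iff hab' hcd'] at heq2
    simp only [Kd, pow_zero, one_mul, iteratedDeriv_zero]
    linarith [heq2]
  have e2 : (c-d)*(a^2-b^2) - (a-b)*(c^2-d^2) = 0 := by
    have := Kd_at_zero a b c d hyp 2
    simp only [Kd, mul_zero, Q2_zero] at this
    nlinarith [this]
  have e4 : (c-d)*(a^4-b^4) - (a-b)*(c^4-d^4) = 0 := by
    have := Kd_at_zero a b c d hyp 4
    simp only [Kd, mul_zero, Q4_zero] at this
    nlinarith [this]
  have hnd : (a-b)*(c-d) ≠ 0 := mul_ne_zero hab' hcd'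
  have hs : a + b = c + d := by
    have factor : (c-d)*(a^2-b^2) - (a-b)*(c^2-d^2) = (a-b)*(c-d)*((a+b)-(c+d)) := by ring
    rw [factor] at e2
    have := mul_eq_zero.mp e2
    rcases this with h' | h'
    · exact absurd h' hnd
    · linarith
  have h4 : (a+b)*(a^2+b^2) = (c+d)*(c^2+d^2) := by
    have factor : (c-d)*(a^4-b^4) - (a-b)*(c^4-d^4)
        = (a-b)*(c-d)*((a+b)*(a^2+b^2)-(c+d)*(c^2+d^2)) := by ring
    rw [factor] at e4
    rcases mul_eq_zero.mp e4 with h' | h'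
    · exact absurd h' hnd
    · linarith
  by_cases hs0 : a + b = 0
  · exact Or.inl ⟨hs0, by rw [← hs]; exact hs0⟩
  · right
    have hsq : a^2 + b^2 = c^2 + d^2 := by
      rw [hs] at h4
      have := mul_left_cancel₀ (by rw [← hs]; exact hs0) h4
      linarith
    have hprod : a * b = c * d := by linear_combination ((a+b+c+d)/2) * hs - (1/2) * hsq
    have hroot : (a - c) * (a - d) = 0 := by linear_combination a * hs - hprod
    rcases mul_eq_zero.mp hroot with h' | h'
    · left
      constructor
      · linarith
      · linarith
    · right
      constructor
      · linarith
      · linarith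
end
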